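/- arXiv:1210.5673 — 3 statements merged into one kernel-verified Lean document; each statement's English description precedes it below -/
import Mathlib

section
/- Let c : [0,1]² → ℝ be a nonnegative integrable function with ∫₀¹ c(x,y) dy = 1 for a.e. x and ∫₀¹ c(x,y) dx = 1 for a.e. y. Suppose there exist nonnegative integrable ε₁, ε₂ : [0,1] → ℝ with c(x,y) ≥ ε₁(x) + ε₂(y) for a.e. (x,y). Then for all f, g with ∫f² = ∫g² = 1 and ∫f = ∫g = 0, we have ∫∫ f(x)g(y)c(x,y) dx dy ≤ 1 − (1/2)(∫ε₁ + ∫ε₂). -/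
open MeasureTheory

theorem copula_density_correlation_bound
    (c : ℝ → ℝ → ℝ) (ε₁ ε₂ : ℝ → ℝ)
    (hc_nonneg : ∀ᵐ p ∂(volume.restrict (Set.Icc (0:ℝ) 1 ×ˢ Set.Icc (0:ℝ) 1)),
      0 ≤ c p.1 p.2)
    (hc_int : IntegrableOn (fun p : ℝ × ℝ => c p.1 p.2)
      (Set.Icc (0:ℝ) 1 ×ˢ Set.Icc (0:ℝ) 1))
    (hmarg1 : ∀ᵐ x ∂(volume.restrict (Set.Icc (0:ℝ) 1)),
      ∫ y in Set.Icc (0:ℝ) 1, c x y = 1)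
    (hmarg2 : ∀ᵐ y ∂(volume.restrict (Set.Icc (0:ℝ) 1)),
      ∫ x in Set.Icc (0:ℝ) 1, c x y = 1)
    (hε₁_nonneg : ∀ x ∈ Set.Icc (0:ℝ) 1, 0 ≤ ε₁ x)
    (hε₂_nonneg : ∀ x ∈ Set.Icc (0:ℝ) 1, 0 ≤ ε₂ x)
    (hε₁_int : IntegrableOn ε₁ (Set.Icc (0:ℝ) 1))
    (hε₂_int : IntegrableOn ε₂ (Set.Icc (0:ℝ) 1))
    (hdom : ∀ᵐ p ∂(volume.restrict (Set.Icc (0:ℝ) 1 ×ˢ Set.Icc (0:ℝ) 1)),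
      ε₁ p.1 + ε₂ p.2 ≤ c p.1 p.2) :
    ∀ f g : ℝ → ℝ,
      MemLp f 2 (volume.restrict (Set.Icc (0:ℝ) 1)) →
      MemLp g 2 (volume.restrict (Set.Icc (0:ℝ) 1)) →
      (∫ x in Set.Icc (0:ℝ) 1, (f x) ^ 2) = 1 →
      (∫ x in Set.Icc (0:ℝ) 1, (g x) ^ 2) = 1 →
      (∫ x in Set.Icc (0:ℝ) 1, f x) = 0 →
      (∫ x in Set.Icc (0:ℝ) 1, g x) = 0 →
      (∫ p in Set.Icc (0:ℝ) 1 ×ˢ Set.Icc (0:ℝ) 1, f p.1 * g p.2 * c p.1 p.2) ≤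
        1 - (1 / 2) * ((∫ x in Set.Icc (0:ℝ) 1, ε₁ x) + ∫ y in Set.Icc (0:ℝ) 1, ε₂ y) := by
  intro f g hf hg hf2 hg2 hf0 hg0
  set I : Set ℝ := Set.Icc (0:ℝ) 1 with hIdef
  set μ : Measure ℝ := volume.restrict I with hμdef
  have hIms : MeasurableSet I := measurableSet_Icc
  have hProd : (volume : Measure (ℝ × ℝ)).restrict (I ×ˢ I) = μ.prod μ := by
    rw [hμdef, Measure.prod_restrict, ← Measure.volume_eq_prod]
  haveI hμprob : IsProbabilityMeasure μ := ⟨by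
    rw [hμdef, Measure.restrict_apply_univ, hIdef, Real.volume_Icc]; norm_num⟩
  -- transported hypotheses
  have hc_nonneg' : ∀ᵐ p ∂(μ.prod μ), 0 ≤ c p.1 p.2 := by rw [← hProd]; exact hc_nonneg
  have hdom' : ∀ᵐ p ∂(μ.prod μ), ε₁ p.1 + ε₂ p.2 ≤ c p.1 p.2 := by rw [← hProd]; exact hdom
  have hc_int' : Integrable (fun p : ℝ × ℝ => c p.1 p.2) (μ.prod μ) := by
    rw [← hProd]; exact hc_int
  have hε₁_int' : Integrable ε₁ μ := hε₁_int
  have hε₂_int' : Integrable ε₂ μ := hε₂_int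
  have hmem : ∀ᵐ x ∂μ, x ∈ I := ae_restrict_mem hIms
  have hmemP : ∀ᵐ p : ℝ × ℝ ∂(μ.prod μ), p.1 ∈ I ∧ p.2 ∈ I := by
    have : ∀ᵐ p : ℝ × ℝ ∂(μ.prod μ), p ∈ I ×ˢ I := by
      rw [← hProd]; exact ae_restrict_mem (hIms.prod hIms)
    filter_upwards [this] with p hp using hp
  -- basic integrability
  have hfi : Integrable f μ := hf.integrable one_le_two
  have hgi : Integrable g μ := hg.integrable one_le_two
  have hfsq : Integrable (fun x => f x ^ 2) μ := hf.integrable_sq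
  have hgsq : Integrable (fun x => g x ^ 2) μ := hg.integrable_sq
  have hfm : AEStronglyMeasurable f μ := hf.aestronglyMeasurable
  have hgm : AEStronglyMeasurable g μ := hg.aestronglyMeasurable
  have hε₁m : AEStronglyMeasurable ε₁ μ := hε₁_int'.aestronglyMeasurable
  have hε₂m : AEStronglyMeasurable ε₂ μ := hε₂_int'.aestronglyMeasurable
  have hcm : AEStronglyMeasurable (fun p : ℝ × ℝ => c p.1 p.2) (μ.prod μ) :=
    hc_int'.aestronglyMeasurable
  -- sections
  have hsec1 : ∀ᵐ x ∂μ, Integrable (fun y => c x y) μ := hc_int'.prod_right_ae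
  have hsec2 : ∀ᵐ y ∂μ, Integrable (fun x => c x y) μ := hc_int'.prod_left_ae
  have hnn1 : ∀ᵐ x ∂μ, ∀ᵐ y ∂μ, 0 ≤ c x y := Measure.ae_ae_of_ae_prod hc_nonneg'
  have hc_nonneg_swap : ∀ᵐ p : ℝ × ℝ ∂(μ.prod μ), 0 ≤ c p.2 p.1 :=
    (Measure.measurePreserving_swap).quasiMeasurePreserving.ae hc_nonneg'
  have hnn2 : ∀ᵐ y ∂μ, ∀ᵐ x ∂μ, 0 ≤ c x y := Measure.ae_ae_of_ae_prod hc_nonneg_swap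
  -- lintegral marginals
  have hmarg1' : ∀ᵐ x ∂μ, ∫⁻ y, ENNReal.ofReal (c x y) ∂μ = 1 := by
    filter_upwards [hsec1, hnn1, hmarg1] with x hint hnn hmg
    rw [← ofReal_integral_eq_lintegral_ofReal hint hnn, hmg, ENNReal.ofReal_one]
  have hmarg2' : ∀ᵐ y ∂μ, ∫⁻ x, ENNReal.ofReal (c x y) ∂μ = 1 := by
    filter_upwards [hsec2, hnn2, hmarg2] with y hint hnn hmg
    rw [← ofReal_integral_eq_lintegral_ofReal hint hnn, hmg, ENNReal.ofReal_one]
  -- f² c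
  have hf2c_m : AEStronglyMeasurable (fun p : ℝ × ℝ => f p.1 ^ 2 * c p.1 p.2) (μ.prod μ) :=
    ((hfm.comp_fst (ν := μ)).pow 2).mul hcm
  have key1 : ∫⁻ p, ENNReal.ofReal (f p.1 ^ 2 * c p.1 p.2) ∂(μ.prod μ) = ENNReal.ofReal 1 := by
    rw [lintegral_prod _ hf2c_m.aemeasurable.ennreal_ofReal]
    have h : ∀ᵐ x ∂μ, ∫⁻ y, ENNReal.ofReal (f x ^ 2 * c x y) ∂μ = ENNReal.ofReal (f x ^ 2) := by
      filter_upwards [hmarg1'] with x h1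
      calc ∫⁻ y, ENNReal.ofReal (f x ^ 2 * c x y) ∂μ
          = ∫⁻ y, ENNReal.ofReal (f x ^ 2) * ENNReal.ofReal (c x y) ∂μ := by
            congr 1; funext y; rw [ENNReal.ofReal_mul (sq_nonneg _)]
        _ = ENNReal.ofReal (f x ^ 2) * ∫⁻ y, ENNReal.ofReal (c x y) ∂μ :=
            lintegral_const_mul' _ _ ENNReal.ofReal_ne_top
        _ = ENNReal.ofReal (f x ^ 2) := by rw [h1, mul_one]
    rw [lintegral_congr_ae h,
      ← ofReal_integral_eq_lintegral_ofReal hfsq (Filter.Eventually.of_forall fun x => sq_nonneg _),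
      hf2]
  have hf2c_int : Integrable (fun p : ℝ × ℝ => f p.1 ^ 2 * c p.1 p.2) (μ.prod μ) := by
    refine ⟨hf2c_m, ?_⟩
    rw [hasFiniteIntegral_iff_norm]
    have h : ∫⁻ p, ENNReal.ofReal ‖f p.1 ^ 2 * c p.1 p.2‖ ∂(μ.prod μ)
        = ∫⁻ p, ENNReal.ofReal (f p.1 ^ 2 * c p.1 p.2) ∂(μ.prod μ) := by
      refine lintegral_congr_ae ?_
      filter_upwards [hc_nonneg'] with p hp
      rw [Real.norm_eq_abs, abs_of_nonneg (mul_nonneg (sq_nonneg _) hp)]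
    rw [h, key1]; exact ENNReal.ofReal_lt_top
  have hf2c_val : ∫ p, f p.1 ^ 2 * c p.1 p.2 ∂(μ.prod μ) = 1 := by
    rw [MeasureTheory.integral_prod _ hf2c_int]
    have h : ∀ᵐ x ∂μ, ∫ y, f x ^ 2 * c x y ∂μ = f x ^ 2 := by
      filter_upwards [hmarg1] with x h1
      rw [integral_const_mul, h1, mul_one]
    rw [integral_congr_ae h, hf2]
  -- g² c
  have hg2c_m : AEStronglyMeasurable (fun p : ℝ × ℝ => g p.2 ^ 2 * c p.1 p.2) (μ.prod μ) :=
    ((hgm.comp_snd (μ := μ)).pow 2).mul hcm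
  have key2 : ∫⁻ p, ENNReal.ofReal (g p.2 ^ 2 * c p.1 p.2) ∂(μ.prod μ) = ENNReal.ofReal 1 := by
    rw [lintegral_prod_symm _ hg2c_m.aemeasurable.ennreal_ofReal]
    have h : ∀ᵐ y ∂μ, ∫⁻ x, ENNReal.ofReal (g y ^ 2 * c x y) ∂μ = ENNReal.ofReal (g y ^ 2) := by
      filter_upwards [hmarg2'] with y h1
      calc ∫⁻ x, ENNReal.ofReal (g y ^ 2 * c x y) ∂μ
          = ∫⁻ x, ENNReal.ofReal (g y ^ 2) * ENNReal.ofReal (c x y) ∂μ := by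
            congr 1; funext x; rw [ENNReal.ofReal_mul (sq_nonneg _)]
        _ = ENNReal.ofReal (g y ^ 2) * ∫⁻ x, ENNReal.ofReal (c x y) ∂μ :=
            lintegral_const_mul' _ _ ENNReal.ofReal_ne_top
        _ = ENNReal.ofReal (g y ^ 2) := by rw [h1, mul_one]
    rw [lintegral_congr_ae h,
      ← ofReal_integral_eq_lintegral_ofReal hgsq (Filter.Eventually.of_forall fun x => sq_nonneg _),
      hg2]
  have hg2c_int : Integrable (fun p : ℝ × ℝ => g p.2 ^ 2 * c p.1 p.2) (μ.prod μ) := by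
    refine ⟨hg2c_m, ?_⟩
    rw [hasFiniteIntegral_iff_norm]
    have h : ∫⁻ p, ENNReal.ofReal ‖g p.2 ^ 2 * c p.1 p.2‖ ∂(μ.prod μ)
        = ∫⁻ p, ENNReal.ofReal (g p.2 ^ 2 * c p.1 p.2) ∂(μ.prod μ) := by
      refine lintegral_congr_ae ?_
      filter_upwards [hc_nonneg'] with p hp
      rw [Real.norm_eq_abs, abs_of_nonneg (mul_nonneg (sq_nonneg _) hp)]
    rw [h, key2]; exact ENNReal.ofReal_lt_top
  have hg2c_val : ∫ p, g p.2 ^ 2 * c p.1 p.2 ∂(μ.prod μ) = 1 := by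
    rw [MeasureTheory.integral_prod_symm _ hg2c_int]
    have h : ∀ᵐ y ∂μ, ∫ x, g y ^ 2 * c x y ∂μ = g y ^ 2 := by
      filter_upwards [hmarg2] with y h1
      rw [integral_const_mul, h1, mul_one]
    rw [integral_congr_ae h, hg2]
  -- f g c integrable
  have hfgc_int : Integrable (fun p : ℝ × ℝ => f p.1 * g p.2 * c p.1 p.2) (μ.prod μ) := by
    refine (hf2c_int.add hg2c_int).mono
      (((hfm.comp_fst (ν := μ)).mul (hgm.comp_snd (μ := μ))).mul hcm) ?_
    filter_upwards [hc_nonneg'] with p hp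
    simp only [Pi.add_apply]
    have h1 : |f p.1 * g p.2| ≤ f p.1 ^ 2 + g p.2 ^ 2 := by
      nlinarith [abs_nonneg (f p.1 * g p.2), abs_mul (f p.1) (g p.2),
        sq_abs (f p.1), sq_abs (g p.2), sq_nonneg (|f p.1| - |g p.2|)]
    have hnn : (0:ℝ) ≤ f p.1 ^ 2 * c p.1 p.2 + g p.2 ^ 2 * c p.1 p.2 :=
      add_nonneg (mul_nonneg (sq_nonneg _) hp) (mul_nonneg (sq_nonneg _) hp)
    rw [Real.norm_eq_abs, Real.norm_eq_abs, abs_of_nonneg hnn, abs_mul, abs_of_nonneg hp]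
    calc |f p.1 * g p.2| * c p.1 p.2 ≤ (f p.1 ^ 2 + g p.2 ^ 2) * c p.1 p.2 :=
          mul_le_mul_of_nonneg_right h1 hp
      _ = f p.1 ^ 2 * c p.1 p.2 + g p.2 ^ 2 * c p.1 p.2 := by ring
  -- (f - g)² c
  have heq : (fun p : ℝ × ℝ => (f p.1 - g p.2) ^ 2 * c p.1 p.2)
      = fun p : ℝ × ℝ => f p.1 ^ 2 * c p.1 p.2 + g p.2 ^ 2 * c p.1 p.2
          - 2 * (f p.1 * g p.2 * c p.1 p.2) := by
    funext p; ring
  have hD_int : Integrable (fun p : ℝ × ℝ => (f p.1 - g p.2) ^ 2 * c p.1 p.2) (μ.prod μ) := by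
    rw [heq]; exact (hf2c_int.add hg2c_int).sub (hfgc_int.const_mul 2)
  have hD_val : ∫ p, (f p.1 - g p.2) ^ 2 * c p.1 p.2 ∂(μ.prod μ)
      = 2 - 2 * ∫ p, f p.1 * g p.2 * c p.1 p.2 ∂(μ.prod μ) := by
    have hA : Integrable
        (fun p : ℝ × ℝ => f p.1 ^ 2 * c p.1 p.2 + g p.2 ^ 2 * c p.1 p.2) (μ.prod μ) :=
      hf2c_int.add hg2c_int
    have hsubeq := integral_sub hA (hfgc_int.const_mul 2)
    have haddeq := integral_add hf2c_int hg2c_int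
    rw [heq, hsubeq, haddeq, integral_const_mul, hf2c_val, hg2c_val]
    ring
  -- the subtracted-square one-variable integrals
  have hsub_int1 : ∀ a : ℝ, Integrable (fun y => (a - g y) ^ 2) μ := by
    intro a
    have h : (fun y => (a - g y) ^ 2) = fun y => a ^ 2 - 2 * a * g y + g y ^ 2 := by
      funext y; ring
    rw [h]; exact ((integrable_const _).sub (hgi.const_mul _)).add hgsq
  have hsub_val1 : ∀ a : ℝ, ∫ y, (a - g y) ^ 2 ∂μ = a ^ 2 + 1 := by
    intro a
    have h : (fun y => (a - g y) ^ 2) = fun y => a ^ 2 - 2 * a * g y + g y ^ 2 := by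
      funext y; ring
    have hB : Integrable (fun y => a ^ 2 - 2 * a * g y) μ :=
      (integrable_const _).sub (hgi.const_mul _)
    have e1 := integral_add hB hgsq
    have e2 := integral_sub (integrable_const (a ^ 2) (μ := μ)) (hgi.const_mul (2 * a))
    rw [h, e1, e2, integral_const_mul, hg0, hg2, integral_const]
    simp
  have hsub_int2 : ∀ b : ℝ, Integrable (fun x => (f x - b) ^ 2) μ := by
    intro b
    have h : (fun x => (f x - b) ^ 2) = fun x => f x ^ 2 - 2 * b * f x + b ^ 2 := by
      funext x; ring
    rw [h]; exact (hfsq.sub (hfi.const_mul _)).add (integrable_const _)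
  have hsub_val2 : ∀ b : ℝ, ∫ x, (f x - b) ^ 2 ∂μ = 1 + b ^ 2 := by
    intro b
    have h : (fun x => (f x - b) ^ 2) = fun x => f x ^ 2 - 2 * b * f x + b ^ 2 := by
      funext x; ring
    have hB : Integrable (fun x => f x ^ 2 - 2 * b * f x) μ :=
      hfsq.sub (hfi.const_mul _)
    have e1 := integral_add hB (integrable_const (b ^ 2) (μ := μ))
    have e2 := integral_sub hfsq (hfi.const_mul (2 * b))
    rw [h, e1, e2, integral_const_mul, hf0, hf2, integral_const]
    simp
  -- E1 and E2
  set E1 : ℝ := ∫ x, ε₁ x ∂μ with hE1def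
  set E2 : ℝ := ∫ y, ε₂ y ∂μ with hE2def
  have hε₁nn : 0 ≤ᵐ[μ] ε₁ := by filter_upwards [hmem] with x hx using hε₁_nonneg x hx
  have hε₂nn : 0 ≤ᵐ[μ] ε₂ := by filter_upwards [hmem] with x hx using hε₂_nonneg x hx
  have hE1nn : 0 ≤ E1 := integral_nonneg_of_ae hε₁nn
  have hE2nn : 0 ≤ E2 := integral_nonneg_of_ae hε₂nn
  -- lower bounds
  have meas1 : AEMeasurable (fun p : ℝ × ℝ => ENNReal.ofReal ((f p.1 - g p.2) ^ 2 * ε₁ p.1))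
      (μ.prod μ) :=
    ((((hfm.comp_fst (ν := μ)).sub (hgm.comp_snd (μ := μ))).pow 2).mul
      (hε₁m.comp_fst (ν := μ))).aemeasurable.ennreal_ofReal
  have meas2 : AEMeasurable (fun p : ℝ × ℝ => ENNReal.ofReal ((f p.1 - g p.2) ^ 2 * ε₂ p.2))
      (μ.prod μ) :=
    ((((hfm.comp_fst (ν := μ)).sub (hgm.comp_snd (μ := μ))).pow 2).mul
      (hε₂m.comp_snd (μ := μ))).aemeasurable.ennreal_ofReal
  have hB1 : ENNReal.ofReal E1
      ≤ ∫⁻ p, ENNReal.ofReal ((f p.1 - g p.2) ^ 2 * ε₁ p.1) ∂(μ.prod μ) := by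
    rw [lintegral_prod _ meas1]
    have step : ∀ᵐ x ∂μ, ENNReal.ofReal (ε₁ x)
        ≤ ∫⁻ y, ENNReal.ofReal ((f x - g y) ^ 2 * ε₁ x) ∂μ := by
      filter_upwards [hmem] with x hx
      have hε : 0 ≤ ε₁ x := hε₁_nonneg x hx
      calc ENNReal.ofReal (ε₁ x) = ENNReal.ofReal (ε₁ x) * ENNReal.ofReal 1 := by simp
        _ ≤ ENNReal.ofReal (ε₁ x) * ENNReal.ofReal (f x ^ 2 + 1) :=
            mul_le_mul_right (ENNReal.ofReal_le_ofReal (by nlinarith [sq_nonneg (f x)])) _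
        _ = ENNReal.ofReal (ε₁ x) * ENNReal.ofReal (∫ y, (f x - g y) ^ 2 ∂μ) := by
            rw [hsub_val1]
        _ = ENNReal.ofReal (ε₁ x) * ∫⁻ y, ENNReal.ofReal ((f x - g y) ^ 2) ∂μ := by
            rw [ofReal_integral_eq_lintegral_ofReal (hsub_int1 _)
              (Filter.Eventually.of_forall fun y => sq_nonneg _)]
        _ = ∫⁻ y, ENNReal.ofReal (ε₁ x) * ENNReal.ofReal ((f x - g y) ^ 2) ∂μ :=
            (lintegral_const_mul' _ _ ENNReal.ofReal_ne_top).symm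
        _ = ∫⁻ y, ENNReal.ofReal ((f x - g y) ^ 2 * ε₁ x) ∂μ := by
            congr 1; funext y; rw [← ENNReal.ofReal_mul hε, mul_comm]
    calc ENNReal.ofReal E1 = ∫⁻ x, ENNReal.ofReal (ε₁ x) ∂μ :=
          ofReal_integral_eq_lintegral_ofReal hε₁_int' hε₁nn
      _ ≤ _ := lintegral_mono_ae step
  have hB2 : ENNReal.ofReal E2
      ≤ ∫⁻ p, ENNReal.ofReal ((f p.1 - g p.2) ^ 2 * ε₂ p.2) ∂(μ.prod μ) := by
    rw [lintegral_prod_symm _ meas2]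
    have step : ∀ᵐ y ∂μ, ENNReal.ofReal (ε₂ y)
        ≤ ∫⁻ x, ENNReal.ofReal ((f x - g y) ^ 2 * ε₂ y) ∂μ := by
      filter_upwards [hmem] with y hy
      have hε : 0 ≤ ε₂ y := hε₂_nonneg y hy
      calc ENNReal.ofReal (ε₂ y) = ENNReal.ofReal (ε₂ y) * ENNReal.ofReal 1 := by simp
        _ ≤ ENNReal.ofReal (ε₂ y) * ENNReal.ofReal (1 + g y ^ 2) :=
            mul_le_mul_right (ENNReal.ofReal_le_ofReal (by nlinarith [sq_nonneg (g y)])) _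
        _ = ENNReal.ofReal (ε₂ y) * ENNReal.ofReal (∫ x, (f x - g y) ^ 2 ∂μ) := by
            rw [hsub_val2]
        _ = ENNReal.ofReal (ε₂ y) * ∫⁻ x, ENNReal.ofReal ((f x - g y) ^ 2) ∂μ := by
            rw [ofReal_integral_eq_lintegral_ofReal (hsub_int2 _)
              (Filter.Eventually.of_forall fun x => sq_nonneg _)]
        _ = ∫⁻ x, ENNReal.ofReal (ε₂ y) * ENNReal.ofReal ((f x - g y) ^ 2) ∂μ :=
            (lintegral_const_mul' _ _ ENNReal.ofReal_ne_top).symm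
        _ = ∫⁻ x, ENNReal.ofReal ((f x - g y) ^ 2 * ε₂ y) ∂μ := by
            congr 1; funext x; rw [← ENNReal.ofReal_mul hε, mul_comm]
    calc ENNReal.ofReal E2 = ∫⁻ y, ENNReal.ofReal (ε₂ y) ∂μ :=
          ofReal_integral_eq_lintegral_ofReal hε₂_int' hε₂nn
      _ ≤ _ := lintegral_mono_ae step
  have hDnn : 0 ≤ᵐ[μ.prod μ] fun p : ℝ × ℝ => (f p.1 - g p.2) ^ 2 * c p.1 p.2 := by
    filter_upwards [hc_nonneg'] with p hp using mul_nonneg (sq_nonneg _) hp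
  have hcomb : ENNReal.ofReal E1 + ENNReal.ofReal E2
      ≤ ∫⁻ p, ENNReal.ofReal ((f p.1 - g p.2) ^ 2 * c p.1 p.2) ∂(μ.prod μ) := by
    refine le_trans (add_le_add hB1 hB2) ?_
    rw [← lintegral_add_left' meas1]
    refine lintegral_mono_ae ?_
    filter_upwards [hdom', hmemP] with p hd hp
    have h1 : 0 ≤ (f p.1 - g p.2) ^ 2 * ε₁ p.1 :=
      mul_nonneg (sq_nonneg _) (hε₁_nonneg _ hp.1)
    have h2 : 0 ≤ (f p.1 - g p.2) ^ 2 * ε₂ p.2 :=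
      mul_nonneg (sq_nonneg _) (hε₂_nonneg _ hp.2)
    rw [← ENNReal.ofReal_add h1 h2]
    refine ENNReal.ofReal_le_ofReal ?_
    have h3 : (f p.1 - g p.2) ^ 2 * ε₁ p.1 + (f p.1 - g p.2) ^ 2 * ε₂ p.2
        = (f p.1 - g p.2) ^ 2 * (ε₁ p.1 + ε₂ p.2) := by ring
    rw [h3]
    exact mul_le_mul_of_nonneg_left hd (sq_nonneg _)
  have hDlb : E1 + E2 ≤ ∫ p, (f p.1 - g p.2) ^ 2 * c p.1 p.2 ∂(μ.prod μ) := by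
    have h1 : ENNReal.ofReal (E1 + E2)
        ≤ ENNReal.ofReal (∫ p, (f p.1 - g p.2) ^ 2 * c p.1 p.2 ∂(μ.prod μ)) := by
      rw [ENNReal.ofReal_add hE1nn hE2nn,
        ofReal_integral_eq_lintegral_ofReal hD_int hDnn]
      exact hcomb
    exact (ENNReal.ofReal_le_ofReal_iff (integral_nonneg_of_ae hDnn)).mp h1
  -- conclusion
  rw [hProd]
  linarith [hDlb, hD_val]
end

section
/- Under the hypotheses of the previous statement, and additionally assuming ∫₀¹ ε₁ + ∫₀¹ ε₂ > 0, one has sup over mean-zero, L²-normalized f, g of |∫∫ f(x)g(y)c(x,y) dx dy| ≤ 1 − (1/2)(∫ε₁ + ∫ε₂) < 1. -/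
open MeasureTheory

private lemma sq_slice_integral
    {μ : Measure ℝ} [IsProbabilityMeasure μ] {c : ℝ → ℝ → ℝ} {f : ℝ → ℝ}
    (hcint : Integrable (fun p : ℝ × ℝ => c p.1 p.2) (μ.prod μ))
    (hcnn : ∀ᵐ p ∂(μ.prod μ), 0 ≤ c p.1 p.2)
    (hmarg : ∀ᵐ x ∂μ, ∫ y, c x y ∂μ = 1)
    (hf : MemLp f 2 μ) (hf2 : ∫ x, f x ^ 2 ∂μ = 1) :
    Integrable (fun p : ℝ × ℝ => f p.1 ^ 2 * c p.1 p.2) (μ.prod μ) ∧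
      ∫ p, f p.1 ^ 2 * c p.1 p.2 ∂(μ.prod μ) = 1 := by
  have hf2int : Integrable (fun x => f x ^ 2) μ := hf.integrable_sq
  have hfm2 : AEStronglyMeasurable (fun x => f x ^ 2) μ := hf2int.aestronglyMeasurable
  have hasm : AEStronglyMeasurable (fun p : ℝ × ℝ => f p.1 ^ 2 * c p.1 p.2) (μ.prod μ) :=
    hfm2.comp_fst.mul hcint.aestronglyMeasurable
  have key : Integrable (fun p : ℝ × ℝ => f p.1 ^ 2 * c p.1 p.2) (μ.prod μ) := by
    refine (integrable_prod_iff hasm).2 ⟨?_, ?_⟩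
    · filter_upwards [hcint.prod_right_ae] with x hix
      exact hix.const_mul _
    · apply Integrable.congr hf2int
      filter_upwards [Measure.ae_ae_of_ae_prod hcnn, hmarg, hcint.prod_right_ae]
        with x hnn hmx hix
      have h1 : ∫ y, ‖f x ^ 2 * c x y‖ ∂μ = ∫ y, f x ^ 2 * c x y ∂μ := by
        apply integral_congr_ae
        filter_upwards [hnn] with y hy
        rw [Real.norm_eq_abs, abs_of_nonneg (mul_nonneg (sq_nonneg _) hy)]
      rw [h1, integral_const_mul, hmx, mul_one]
  refine ⟨key, ?_⟩
  rw [integral_prod _ key]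
  have h2 : (fun x => ∫ y, f x ^ 2 * c x y ∂μ) =ᵐ[μ] fun x => f x ^ 2 := by
    filter_upwards [hmarg] with x hmx
    rw [integral_const_mul, hmx, mul_one]
  rw [integral_congr_ae h2, hf2]

set_option maxHeartbeats 2000000 in
theorem copula_density_rho_one_lt_one
    (c : ℝ → ℝ → ℝ) (ε₁ ε₂ : ℝ → ℝ)
    (hc_nonneg : ∀ᵐ p ∂(volume.restrict (Set.Icc (0:ℝ) 1 ×ˢ Set.Icc (0:ℝ) 1)),
      0 ≤ c p.1 p.2)
    (hc_int : IntegrableOn (fun p : ℝ × ℝ => c p.1 p.2)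
      (Set.Icc (0:ℝ) 1 ×ˢ Set.Icc (0:ℝ) 1))
    (hmarg1 : ∀ᵐ x ∂(volume.restrict (Set.Icc (0:ℝ) 1)),
      ∫ y in Set.Icc (0:ℝ) 1, c x y = 1)
    (hmarg2 : ∀ᵐ y ∂(volume.restrict (Set.Icc (0:ℝ) 1)),
      ∫ x in Set.Icc (0:ℝ) 1, c x y = 1)
    (hε₁_nonneg : ∀ x ∈ Set.Icc (0:ℝ) 1, 0 ≤ ε₁ x)
    (hε₂_nonneg : ∀ x ∈ Set.Icc (0:ℝ) 1, 0 ≤ ε₂ x)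
    (hε₁_int : IntegrableOn ε₁ (Set.Icc (0:ℝ) 1))
    (hε₂_int : IntegrableOn ε₂ (Set.Icc (0:ℝ) 1))
    (hdom : ∀ᵐ p ∂(volume.restrict (Set.Icc (0:ℝ) 1 ×ˢ Set.Icc (0:ℝ) 1)),
      ε₁ p.1 + ε₂ p.2 ≤ c p.1 p.2)
    (hpos : 0 < (∫ x in Set.Icc (0:ℝ) 1, ε₁ x) + ∫ y in Set.Icc (0:ℝ) 1, ε₂ y) :
    sSup {r : ℝ | ∃ f g : ℝ → ℝ,
        MemLp f 2 (volume.restrict (Set.Icc (0:ℝ) 1)) ∧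
        MemLp g 2 (volume.restrict (Set.Icc (0:ℝ) 1)) ∧
        (∫ x in Set.Icc (0:ℝ) 1, (f x) ^ 2) = 1 ∧
        (∫ x in Set.Icc (0:ℝ) 1, (g x) ^ 2) = 1 ∧
        (∫ x in Set.Icc (0:ℝ) 1, f x) = 0 ∧
        (∫ x in Set.Icc (0:ℝ) 1, g x) = 0 ∧
        r = |∫ p in Set.Icc (0:ℝ) 1 ×ˢ Set.Icc (0:ℝ) 1, f p.1 * g p.2 * c p.1 p.2|} ≤
      1 - (1 / 2) * ((∫ x in Set.Icc (0:ℝ) 1, ε₁ x) + ∫ y in Set.Icc (0:ℝ) 1, ε₂ y) ∧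
    1 - (1 / 2) * ((∫ x in Set.Icc (0:ℝ) 1, ε₁ x) + ∫ y in Set.Icc (0:ℝ) 1, ε₂ y) < 1 := by
  set s : Set ℝ := Set.Icc (0:ℝ) 1 with hs_def
  set μ : Measure ℝ := volume.restrict s with hμ_def
  have hsm : MeasurableSet s := by rw [hs_def]; exact measurableSet_Icc
  have hprod : (volume : Measure (ℝ × ℝ)).restrict (s ×ˢ s) = μ.prod μ := by
    rw [hμ_def, Measure.prod_restrict, ← Measure.volume_eq_prod]
  have hprob : IsProbabilityMeasure μ := by
    constructor
    rw [hμ_def, Measure.restrict_apply_univ, hs_def, Real.volume_Icc]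
    norm_num
  have hcnn : ∀ᵐ p ∂(μ.prod μ), 0 ≤ c p.1 p.2 := by rw [← hprod]; exact hc_nonneg
  have hcint : Integrable (fun p : ℝ × ℝ => c p.1 p.2) (μ.prod μ) := by
    rw [← hprod]; exact hc_int
  have hdom' : ∀ᵐ p ∂(μ.prod μ), ε₁ p.1 + ε₂ p.2 ≤ c p.1 p.2 := by
    rw [← hprod]; exact hdom
  have hmem : ∀ᵐ x ∂μ, x ∈ s := by rw [hμ_def]; exact ae_restrict_mem hsm
  have hε₁0 : ∀ᵐ x ∂μ, 0 ≤ ε₁ x := hmem.mono fun x hx => hε₁_nonneg x hx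
  have hε₂0 : ∀ᵐ y ∂μ, 0 ≤ ε₂ y := hmem.mono fun x hx => hε₂_nonneg x hx
  have hε₁int : Integrable ε₁ μ := hε₁_int
  have hε₂int : Integrable ε₂ μ := hε₂_int
  have hS₁0 : 0 ≤ ∫ x, ε₁ x ∂μ := integral_nonneg_of_ae hε₁0
  have hS₂0 : 0 ≤ ∫ y, ε₂ y ∂μ := integral_nonneg_of_ae hε₂0
  have hcone : ∫ p, c p.1 p.2 ∂(μ.prod μ) = 1 := by
    rw [integral_prod _ hcint, integral_congr_ae (g := fun _ => (1:ℝ)) hmarg1]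
    simp
  -- ε₁ ≤ 1 a.e. and ε₂ ≤ 1 a.e.
  have hε₁le : ∀ᵐ x ∂μ, ε₁ x ≤ 1 := by
    filter_upwards [hcint.prod_right_ae, Measure.ae_ae_of_ae_prod hdom', hmarg1]
      with x hix hdx hmx
    have h1 : ∫ y, (ε₁ x + ε₂ y) ∂μ ≤ ∫ y, c x y ∂μ :=
      integral_mono_ae ((integrable_const _).add hε₂int) hix hdx
    rw [integral_add (integrable_const _) hε₂int, integral_const, probReal_univ, one_smul, hmx] at h1
    linarith
  have hswap : ∀ᵐ p ∂(μ.prod μ), ε₁ p.2 + ε₂ p.1 ≤ c p.2 p.1 :=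
    (Measure.measurePreserving_swap (μ := μ) (ν := μ)).quasiMeasurePreserving.ae hdom'
  have hcnnswap : ∀ᵐ p ∂(μ.prod μ), 0 ≤ c p.2 p.1 :=
    (Measure.measurePreserving_swap (μ := μ) (ν := μ)).quasiMeasurePreserving.ae hcnn
  have hcintswap : Integrable (fun p : ℝ × ℝ => c p.2 p.1) (μ.prod μ) := hcint.swap
  have hε₂le : ∀ᵐ y ∂μ, ε₂ y ≤ 1 := by
    filter_upwards [hcintswap.prod_right_ae, Measure.ae_ae_of_ae_prod hswap, hmarg2]
      with y hiy hdy hmy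
    have h1 : ∫ x, (ε₁ x + ε₂ y) ∂μ ≤ ∫ x, c x y ∂μ := by
      refine integral_mono_ae (hε₁int.add (integrable_const _)) hiy ?_
      filter_upwards [hdy] with x hx
      linarith
    rw [integral_add hε₁int (integrable_const _), integral_const, probReal_univ, one_smul, hmy] at h1
    linarith
  -- S₁ + S₂ ≤ 1
  have hεsum_int : Integrable (fun p : ℝ × ℝ => ε₁ p.1 + ε₂ p.2) (μ.prod μ) := by
    refine Integrable.add ?_ ?_
    · simpa using hε₁int.mul_prod (integrable_const (1:ℝ))
    · simpa using (integrable_const (1:ℝ)).mul_prod hε₂int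
  have hSle1 : (∫ x, ε₁ x ∂μ) + (∫ y, ε₂ y ∂μ) ≤ 1 := by
    have h := integral_mono_ae hεsum_int hcint hdom'
    rw [hcone] at h
    have he1 : ∫ p, ε₁ p.1 ∂(μ.prod μ) = ∫ x, ε₁ x ∂μ := by
      simpa using integral_prod_mul (μ := μ) (ν := μ) ε₁ (fun _ => (1:ℝ))
    have he2 : ∫ p, ε₂ p.2 ∂(μ.prod μ) = ∫ y, ε₂ y ∂μ := by
      simpa using integral_prod_mul (μ := μ) (ν := μ) (fun _ => (1:ℝ)) ε₂
    rw [integral_add (by simpa using hε₁int.mul_prod (integrable_const (1:ℝ)))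
      (by simpa using (integrable_const (1:ℝ)).mul_prod hε₂int), he1, he2] at h
    exact h
  constructor
  · apply Real.sSup_le
    · rintro r ⟨f, g, hf, hg, hf2, hg2, hf0, hg0, rfl⟩
      rw [hprod]
      have hfm : AEStronglyMeasurable f μ := hf.aestronglyMeasurable
      have hgm : AEStronglyMeasurable g μ := hg.aestronglyMeasurable
      have hf2int : Integrable (fun x => f x ^ 2) μ := hf.integrable_sq
      have hg2int : Integrable (fun x => g x ^ 2) μ := hg.integrable_sq
      have hfint : Integrable f μ := hf.integrable one_le_two
      have hgint : Integrable g μ := hg.integrable one_le_two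
      -- I1 : ∫ f² c = 1
      obtain ⟨J1, I1⟩ := sq_slice_integral hcint hcnn hmarg1 hf hf2
      -- I2 : ∫ g² c = 1 (via swap)
      obtain ⟨J2', I2'⟩ := sq_slice_integral (c := fun x y => c y x) hcintswap hcnnswap hmarg2 hg hg2
      have J2 : Integrable (fun p : ℝ × ℝ => g p.2 ^ 2 * c p.1 p.2) (μ.prod μ) := J2'.swap
      have I2 : ∫ p, g p.2 ^ 2 * c p.1 p.2 ∂(μ.prod μ) = 1 := by
        rw [← I2']
        exact ((Measure.measurePreserving_swap (μ := μ) (ν := μ)).integral_comp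
          (MeasurableEquiv.prodComm : ℝ × ℝ ≃ᵐ ℝ × ℝ).measurableEmbedding
          (fun p : ℝ × ℝ => g p.2 ^ 2 * c p.1 p.2)).symm
      -- products with ε's
      have hf2ε₁int : Integrable (fun x => f x ^ 2 * ε₁ x) μ := by
        refine Integrable.mono' hf2int
          (hf2int.aestronglyMeasurable.mul hε₁int.aestronglyMeasurable) ?_
        filter_upwards [hε₁0, hε₁le] with x h0 h1
        rw [Real.norm_eq_abs, abs_of_nonneg (mul_nonneg (sq_nonneg _) h0)]
        nlinarith [sq_nonneg (f x)]
      have hg2ε₂int : Integrable (fun x => g x ^ 2 * ε₂ x) μ := by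
        refine Integrable.mono' hg2int
          (hg2int.aestronglyMeasurable.mul hε₂int.aestronglyMeasurable) ?_
        filter_upwards [hε₂0, hε₂le] with x h0 h1
        rw [Real.norm_eq_abs, abs_of_nonneg (mul_nonneg (sq_nonneg _) h0)]
        nlinarith [sq_nonneg (g x)]
      have hB₁0 : 0 ≤ ∫ x, f x ^ 2 * ε₁ x ∂μ := by
        refine integral_nonneg_of_ae ?_
        filter_upwards [hε₁0] with x h0
        exact mul_nonneg (sq_nonneg _) h0
      have hB₂0 : 0 ≤ ∫ x, g x ^ 2 * ε₂ x ∂μ := by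
        refine integral_nonneg_of_ae ?_
        filter_upwards [hε₂0] with x h0
        exact mul_nonneg (sq_nonneg _) h0
      have J3 : Integrable (fun p : ℝ × ℝ => f p.1 ^ 2 * ε₁ p.1) (μ.prod μ) := by
        simpa using hf2ε₁int.mul_prod (integrable_const (1:ℝ))
      have I3 : ∫ p, f p.1 ^ 2 * ε₁ p.1 ∂(μ.prod μ) = ∫ x, f x ^ 2 * ε₁ x ∂μ := by
        simpa using integral_prod_mul (μ := μ) (ν := μ) (fun x => f x ^ 2 * ε₁ x) (fun _ => (1:ℝ))
      have J4 : Integrable (fun p : ℝ × ℝ => f p.1 ^ 2 * ε₂ p.2) (μ.prod μ) :=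
        hf2int.mul_prod hε₂int
      have I4 : ∫ p, f p.1 ^ 2 * ε₂ p.2 ∂(μ.prod μ) = ∫ y, ε₂ y ∂μ := by
        rw [integral_prod_mul (μ := μ) (ν := μ) (fun x => f x ^ 2) ε₂, hf2, one_mul]
      have J5 : Integrable (fun p : ℝ × ℝ => g p.2 ^ 2 * ε₁ p.1) (μ.prod μ) := by
        have := hε₁int.mul_prod hg2int
        exact this.congr (Filter.Eventually.of_forall fun p => mul_comm _ _)
      have I5 : ∫ p, g p.2 ^ 2 * ε₁ p.1 ∂(μ.prod μ) = ∫ x, ε₁ x ∂μ := by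
        have h := integral_prod_mul (μ := μ) (ν := μ) ε₁ (fun x => g x ^ 2)
        rw [hg2, mul_one] at h
        rw [← h]
        exact integral_congr_ae (Filter.Eventually.of_forall fun p => mul_comm _ _)
      have J6 : Integrable (fun p : ℝ × ℝ => g p.2 ^ 2 * ε₂ p.2) (μ.prod μ) := by
        simpa using (integrable_const (1:ℝ)).mul_prod hg2ε₂int
      have I6 : ∫ p, g p.2 ^ 2 * ε₂ p.2 ∂(μ.prod μ) = ∫ x, g x ^ 2 * ε₂ x ∂μ := by
        simpa using integral_prod_mul (μ := μ) (ν := μ) (fun _ => (1:ℝ)) (fun x => g x ^ 2 * ε₂ x)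
      -- the base integrand and ψ
      have JA : Integrable (fun p : ℝ × ℝ =>
          f p.1 ^ 2 * c p.1 p.2 + g p.2 ^ 2 * c p.1 p.2) (μ.prod μ) := J1.add J2
      have JB : Integrable (fun p : ℝ × ℝ =>
          f p.1 ^ 2 * ε₁ p.1 + g p.2 ^ 2 * ε₁ p.1) (μ.prod μ) := J3.add J5
      have JC : Integrable (fun p : ℝ × ℝ =>
          f p.1 ^ 2 * ε₂ p.2 + g p.2 ^ 2 * ε₂ p.2) (μ.prod μ) := J4.add J6
      have JAB : Integrable (fun p : ℝ × ℝ =>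
          f p.1 ^ 2 * c p.1 p.2 + g p.2 ^ 2 * c p.1 p.2
            - (f p.1 ^ 2 * ε₁ p.1 + g p.2 ^ 2 * ε₁ p.1)) (μ.prod μ) := JA.sub JB
      have hbase_int : Integrable (fun p : ℝ × ℝ =>
          f p.1 ^ 2 * c p.1 p.2 + g p.2 ^ 2 * c p.1 p.2
            - (f p.1 ^ 2 * ε₁ p.1 + g p.2 ^ 2 * ε₁ p.1)
            - (f p.1 ^ 2 * ε₂ p.2 + g p.2 ^ 2 * ε₂ p.2)) (μ.prod μ) := JAB.sub JC
      have hψ_int : Integrable (fun p : ℝ × ℝ =>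
          (1/2 : ℝ) * ((f p.1 ^ 2 + g p.2 ^ 2) * (c p.1 p.2 - ε₁ p.1 - ε₂ p.2))) (μ.prod μ) := by
        refine (hbase_int.const_mul (1/2 : ℝ)).congr
          (Filter.Eventually.of_forall fun p => by ring)
      have hψ_val : ∫ p, (1/2 : ℝ) * ((f p.1 ^ 2 + g p.2 ^ 2) * (c p.1 p.2 - ε₁ p.1 - ε₂ p.2))
          ∂(μ.prod μ) = (1/2 : ℝ) * (1 + 1 - ((∫ x, f x ^ 2 * ε₁ x ∂μ) + ∫ x, ε₁ x ∂μ)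
            - ((∫ y, ε₂ y ∂μ) + ∫ x, g x ^ 2 * ε₂ x ∂μ)) := by
        rw [integral_congr_ae (g := fun p : ℝ × ℝ =>
          (1/2 : ℝ) * (f p.1 ^ 2 * c p.1 p.2 + g p.2 ^ 2 * c p.1 p.2
            - (f p.1 ^ 2 * ε₁ p.1 + g p.2 ^ 2 * ε₁ p.1)
            - (f p.1 ^ 2 * ε₂ p.2 + g p.2 ^ 2 * ε₂ p.2)))
          (Filter.Eventually.of_forall fun p => by ring)]
        rw [integral_const_mul, integral_sub JAB JC,
          integral_sub JA JB, integral_add J1 J2, integral_add J3 J5,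
          integral_add J4 J6, I1, I2, I3, I4, I5, I6]
      -- pointwise bound
      have hφψ : ∀ᵐ p ∂(μ.prod μ), |f p.1 * g p.2 * (c p.1 p.2 - ε₁ p.1 - ε₂ p.2)|
          ≤ (1/2 : ℝ) * ((f p.1 ^ 2 + g p.2 ^ 2) * (c p.1 p.2 - ε₁ p.1 - ε₂ p.2)) := by
        filter_upwards [hdom'] with p hp
        have h0 : 0 ≤ c p.1 p.2 - ε₁ p.1 - ε₂ p.2 := by linarith
        have h1 : |f p.1 * g p.2 * (c p.1 p.2 - ε₁ p.1 - ε₂ p.2)|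
            = |f p.1 * g p.2| * (c p.1 p.2 - ε₁ p.1 - ε₂ p.2) := by
          rw [abs_mul, abs_of_nonneg h0]
        have h2 : |f p.1 * g p.2| ≤ (1/2 : ℝ) * (f p.1 ^ 2 + g p.2 ^ 2) := by
          rw [abs_mul]
          nlinarith [sq_nonneg (|f p.1| - |g p.2|), sq_abs (f p.1), sq_abs (g p.2),
            abs_nonneg (f p.1), abs_nonneg (g p.2)]
        calc |f p.1 * g p.2 * (c p.1 p.2 - ε₁ p.1 - ε₂ p.2)|
            = |f p.1 * g p.2| * (c p.1 p.2 - ε₁ p.1 - ε₂ p.2) := h1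
          _ ≤ ((1/2 : ℝ) * (f p.1 ^ 2 + g p.2 ^ 2)) * (c p.1 p.2 - ε₁ p.1 - ε₂ p.2) :=
              mul_le_mul_of_nonneg_right h2 h0
          _ = (1/2 : ℝ) * ((f p.1 ^ 2 + g p.2 ^ 2) * (c p.1 p.2 - ε₁ p.1 - ε₂ p.2)) := by ring
      have hφ_asm : AEStronglyMeasurable
          (fun p : ℝ × ℝ => f p.1 * g p.2 * (c p.1 p.2 - ε₁ p.1 - ε₂ p.2)) (μ.prod μ) :=
        (hfm.comp_fst.mul hgm.comp_snd).mul
          ((hcint.aestronglyMeasurable.sub hε₁int.aestronglyMeasurable.comp_fst).sub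
            hε₂int.aestronglyMeasurable.comp_snd)
      have hφ_int : Integrable
          (fun p : ℝ × ℝ => f p.1 * g p.2 * (c p.1 p.2 - ε₁ p.1 - ε₂ p.2)) (μ.prod μ) := by
        refine Integrable.mono' hψ_int hφ_asm ?_
        filter_upwards [hφψ] with p hp
        rw [Real.norm_eq_abs]
        exact hp
      -- splitting off the ε part
      have hfε₁int : Integrable (fun x => f x * ε₁ x) μ := by
        refine Integrable.mono' hfint.abs (hfm.mul hε₁int.aestronglyMeasurable) ?_
        filter_upwards [hε₁0, hε₁le] with x h0 h1
        rw [Real.norm_eq_abs, abs_mul, abs_of_nonneg h0]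
        calc |f x| * ε₁ x ≤ |f x| * 1 := mul_le_mul_of_nonneg_left h1 (abs_nonneg _)
          _ = |f x| := mul_one _
      have hgε₂int : Integrable (fun x => g x * ε₂ x) μ := by
        refine Integrable.mono' hgint.abs (hgm.mul hε₂int.aestronglyMeasurable) ?_
        filter_upwards [hε₂0, hε₂le] with x h0 h1
        rw [Real.norm_eq_abs, abs_mul, abs_of_nonneg h0]
        calc |g x| * ε₂ x ≤ |g x| * 1 := mul_le_mul_of_nonneg_left h1 (abs_nonneg _)
          _ = |g x| := mul_one _
      have hfgε_int : Integrable (fun p : ℝ × ℝ =>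
          f p.1 * ε₁ p.1 * g p.2 + f p.1 * (g p.2 * ε₂ p.2)) (μ.prod μ) :=
        (hfε₁int.mul_prod hgint).add (hfint.mul_prod hgε₂int)
      have hfgε_val : ∫ p, (f p.1 * ε₁ p.1 * g p.2 + f p.1 * (g p.2 * ε₂ p.2)) ∂(μ.prod μ)
          = 0 := by
        rw [integral_add (hfε₁int.mul_prod hgint) (hfint.mul_prod hgε₂int),
          integral_prod_mul (μ := μ) (ν := μ) (fun x => f x * ε₁ x) g,
          integral_prod_mul (μ := μ) (ν := μ) f (fun x => g x * ε₂ x), hf0, hg0]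
        ring
      have hsplit : ∫ p, f p.1 * g p.2 * c p.1 p.2 ∂(μ.prod μ)
          = ∫ p, f p.1 * g p.2 * (c p.1 p.2 - ε₁ p.1 - ε₂ p.2) ∂(μ.prod μ) := by
        have heq : (fun p : ℝ × ℝ => f p.1 * g p.2 * c p.1 p.2)
            = fun p : ℝ × ℝ => f p.1 * g p.2 * (c p.1 p.2 - ε₁ p.1 - ε₂ p.2)
              + (f p.1 * ε₁ p.1 * g p.2 + f p.1 * (g p.2 * ε₂ p.2)) := by
          funext p; ring
        rw [heq, integral_add hφ_int hfgε_int, hfgε_val, add_zero]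
      -- final estimate
      have habs : |∫ p, f p.1 * g p.2 * (c p.1 p.2 - ε₁ p.1 - ε₂ p.2) ∂(μ.prod μ)|
          ≤ ∫ p, (1/2 : ℝ) * ((f p.1 ^ 2 + g p.2 ^ 2) * (c p.1 p.2 - ε₁ p.1 - ε₂ p.2))
            ∂(μ.prod μ) := by
        calc |∫ p, f p.1 * g p.2 * (c p.1 p.2 - ε₁ p.1 - ε₂ p.2) ∂(μ.prod μ)|
            ≤ ∫ p, |f p.1 * g p.2 * (c p.1 p.2 - ε₁ p.1 - ε₂ p.2)| ∂(μ.prod μ) := by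
              simpa only [Real.norm_eq_abs] using norm_integral_le_integral_norm
                (fun p : ℝ × ℝ => f p.1 * g p.2 * (c p.1 p.2 - ε₁ p.1 - ε₂ p.2)) (μ := μ.prod μ)
          _ ≤ _ := integral_mono_ae hφ_int.abs hψ_int hφψ
      rw [hsplit]
      rw [hψ_val] at habs
      linarith
    · linarith
  · linarith
end

section
/- If c : [0,1]² → ℝ is a copula density (nonnegative, with both marginals equal to 1 a.e.) bounded below by a constant ε > 0 a.e., then for all mean-zero f, g with ‖f‖₂ = ‖g‖₂ = 1, the correlation ∫∫ f(x)g(y)c(x,y) dx dy satisfies |∫∫ f g c| ≤ 1 − ε. -/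
open MeasureTheory

/-- Key helper: for a probability measure, if `c` is integrable with nonneg values a.e.
and first marginal 1 a.e., then for integrable nonneg `φ`,
`fun p => φ p.1 * c p.1 p.2` is integrable with integral `∫ φ`. -/
lemma key_marg (μ : Measure ℝ) [IsProbabilityMeasure μ] (c : ℝ → ℝ → ℝ)
    (hc : Integrable (fun p : ℝ × ℝ => c p.1 p.2) (μ.prod μ))
    (hpos : ∀ᵐ p ∂(μ.prod μ), 0 ≤ c p.1 p.2)
    (hm : ∀ᵐ x ∂μ, ∫ y, c x y ∂μ = 1)
    (φ : ℝ → ℝ) (hφ : Integrable φ μ) (hφ0 : ∀ x, 0 ≤ φ x) :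
    Integrable (fun p : ℝ × ℝ => φ p.1 * c p.1 p.2) (μ.prod μ) ∧
      ∫ p, φ p.1 * c p.1 p.2 ∂(μ.prod μ) = ∫ x, φ x ∂μ := by
  have hmeas : AEStronglyMeasurable (fun p : ℝ × ℝ => φ p.1 * c p.1 p.2) (μ.prod μ) :=
    (hφ.aestronglyMeasurable.comp_quasiMeasurePreserving
      MeasureTheory.Measure.quasiMeasurePreserving_fst).mul hc.aestronglyMeasurable
  have hsec : ∀ᵐ x ∂μ, Integrable (fun y => c x y) μ := hc.prod_right_ae
  have hposae : ∀ᵐ x ∂μ, ∀ᵐ y ∂μ, 0 ≤ c x y := Measure.ae_ae_of_ae_prod hpos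
  have hint : Integrable (fun p : ℝ × ℝ => φ p.1 * c p.1 p.2) (μ.prod μ) := by
    rw [integrable_prod_iff hmeas]
    constructor
    · filter_upwards [hsec] with x hx
      exact hx.const_mul _
    · have : (fun x => ∫ y, ‖φ x * c x y‖ ∂μ) =ᵐ[μ] fun x => φ x := by
        filter_upwards [hsec, hposae, hm] with x hx hpx hmx
        have : ∫ y, ‖φ x * c x y‖ ∂μ = ∫ y, φ x * c x y ∂μ := by
          apply integral_congr_ae
          filter_upwards [hpx] with y hy
          rw [Real.norm_eq_abs, abs_of_nonneg (mul_nonneg (hφ0 x) hy)]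
        rw [this, MeasureTheory.integral_const_mul, hmx, mul_one]
      exact hφ.congr this.symm
  refine ⟨hint, ?_⟩
  rw [integral_prod _ hint]
  apply integral_congr_ae
  filter_upwards [hm] with x hmx
  rw [MeasureTheory.integral_const_mul, hmx, mul_one]

theorem bounded_below_density_correlation_bound
    (c : ℝ → ℝ → ℝ) (ε : ℝ) (hε : 0 < ε)
    (hc_nonneg : ∀ᵐ p ∂(volume.restrict (Set.Icc (0:ℝ) 1 ×ˢ Set.Icc (0:ℝ) 1)),
      0 ≤ c p.1 p.2)
    (hc_int : IntegrableOn (fun p : ℝ × ℝ => c p.1 p.2)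
      (Set.Icc (0:ℝ) 1 ×ˢ Set.Icc (0:ℝ) 1))
    (hmarg1 : ∀ᵐ x ∂(volume.restrict (Set.Icc (0:ℝ) 1)),
      ∫ y in Set.Icc (0:ℝ) 1, c x y = 1)
    (hmarg2 : ∀ᵐ y ∂(volume.restrict (Set.Icc (0:ℝ) 1)),
      ∫ x in Set.Icc (0:ℝ) 1, c x y = 1)
    (hdom : ∀ᵐ p ∂(volume.restrict (Set.Icc (0:ℝ) 1 ×ˢ Set.Icc (0:ℝ) 1)),
      ε ≤ c p.1 p.2) :
    ∀ f g : ℝ → ℝ,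
      MemLp f 2 (volume.restrict (Set.Icc (0:ℝ) 1)) →
      MemLp g 2 (volume.restrict (Set.Icc (0:ℝ) 1)) →
      (∫ x in Set.Icc (0:ℝ) 1, (f x) ^ 2) = 1 →
      (∫ x in Set.Icc (0:ℝ) 1, (g x) ^ 2) = 1 →
      (∫ x in Set.Icc (0:ℝ) 1, f x) = 0 →
      (∫ x in Set.Icc (0:ℝ) 1, g x) = 0 →
      |∫ p in Set.Icc (0:ℝ) 1 ×ˢ Set.Icc (0:ℝ) 1, f p.1 * g p.2 * c p.1 p.2| ≤ 1 - ε := by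
  intro f g hf hg hf2 hg2 hf0 hg0
  set μ : Measure ℝ := volume.restrict (Set.Icc (0:ℝ) 1) with hμ
  have hprob : IsProbabilityMeasure μ := by
    constructor
    rw [hμ, Measure.restrict_apply_univ, Real.volume_Icc]
    norm_num
  have hprod : volume.restrict (Set.Icc (0:ℝ) 1 ×ˢ Set.Icc (0:ℝ) 1) = μ.prod μ := by
    rw [hμ, Measure.prod_restrict, ← Measure.volume_eq_prod]
  rw [hprod] at hc_nonneg hdom
  have hc : Integrable (fun p : ℝ × ℝ => c p.1 p.2) (μ.prod μ) := by
    rw [hμ, Measure.prod_restrict, ← Measure.volume_eq_prod]; exact hc_int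
  -- swapped density
  have hswapqmp := (Measure.measurePreserving_swap (μ := μ) (ν := μ)).quasiMeasurePreserving
  -- swapped density
  have hc' : Integrable (fun p : ℝ × ℝ => c p.2 p.1) (μ.prod μ) := hc.swap
  have hpos' : ∀ᵐ p ∂(μ.prod μ), 0 ≤ c p.2 p.1 :=
    hswapqmp.tendsto_ae.eventually hc_nonneg
  have hdom' : ∀ᵐ p ∂(μ.prod μ), ε ≤ c p.2 p.1 :=
    hswapqmp.tendsto_ae.eventually hdom
  -- integrable square functions
  have hf2i : Integrable (fun x => f x ^ 2) μ := hf.integrable_sq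
  have hg2i : Integrable (fun x => g x ^ 2) μ := hg.integrable_sq
  have hfi : Integrable f μ := hf.integrable (by norm_num)
  have hgi : Integrable g μ := hg.integrable (by norm_num)
  obtain ⟨hF, hFint⟩ := key_marg μ c hc hc_nonneg hmarg1 (fun x => f x ^ 2) hf2i
    (fun x => sq_nonneg _)
  obtain ⟨hG', hGint'⟩ := key_marg μ (fun x y => c y x) hc' hpos' hmarg2 (fun x => g x ^ 2) hg2i
    (fun x => sq_nonneg _)
  -- transfer G to the unswapped form
  have hG : Integrable (fun p : ℝ × ℝ => g p.2 ^ 2 * c p.1 p.2) (μ.prod μ) := hG'.swap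
  have hGint : ∫ p, g p.2 ^ 2 * c p.1 p.2 ∂(μ.prod μ) = 1 := by
    have := MeasureTheory.integral_prod_swap (μ := μ) (ν := μ)
      (fun p : ℝ × ℝ => g p.1 ^ 2 * c p.2 p.1)
    simp only [Prod.fst_swap, Prod.snd_swap] at this
    rw [this, hGint', hg2]
  rw [hf2] at hFint
  rw [hprod]
  -- integrability of f p.1 * g p.2
  have hfg : Integrable (fun p : ℝ × ℝ => f p.1 * g p.2) (μ.prod μ) := hfi.mul_prod hgi
  have hfgint : ∫ p, f p.1 * g p.2 ∂(μ.prod μ) = 0 := by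
    rw [MeasureTheory.integral_prod_mul f g, hf0, zero_mul]
  -- first/second coordinate squares
  have hFfst : Integrable (fun p : ℝ × ℝ => f p.1 ^ 2) (μ.prod μ) := by
    have := hf2i.mul_prod (integrable_const (1:ℝ) (μ := μ))
    simpa using this
  have hGsnd : Integrable (fun p : ℝ × ℝ => g p.2 ^ 2) (μ.prod μ) := by
    have := (integrable_const (1:ℝ) (μ := μ)).mul_prod hg2i
    simpa using this
  have hFfstint : ∫ p, f p.1 ^ 2 ∂(μ.prod μ) = 1 := by
    have := MeasureTheory.integral_prod_mul (μ := μ) (ν := μ) (fun x => f x ^ 2) (fun _ => (1:ℝ))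
    simpa [hf2] using this
  have hGsndint : ∫ p, g p.2 ^ 2 ∂(μ.prod μ) = 1 := by
    have := MeasureTheory.integral_prod_mul (μ := μ) (ν := μ) (fun _ => (1:ℝ)) (fun x => g x ^ 2)
    simpa [hg2] using this
  -- dominating function
  set φ : ℝ × ℝ → ℝ := fun p => (f p.1 ^ 2 + g p.2 ^ 2) / 2 * (c p.1 p.2 - ε) with hφdef
  have hφint : Integrable φ (μ.prod μ) := by
    have h1 : Integrable (fun p : ℝ × ℝ =>
        (f p.1 ^ 2 * c p.1 p.2 + g p.2 ^ 2 * c p.1 p.2) / 2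
          - ε * ((f p.1 ^ 2 + g p.2 ^ 2) / 2)) (μ.prod μ) :=
      ((hF.add hG).div_const 2).sub (((hFfst.add hGsnd).div_const 2).const_mul ε)
    refine h1.congr (Filter.Eventually.of_forall fun p => ?_)
    simp only [hφdef]; ring
  have hφmeas : AEStronglyMeasurable φ (μ.prod μ) := hφint.aestronglyMeasurable
  set h : ℝ × ℝ → ℝ := fun p => f p.1 * g p.2 * (c p.1 p.2 - ε) with hhdef
  have hbound : ∀ᵐ p ∂(μ.prod μ), ‖h p‖ ≤ φ p := by
    filter_upwards [hdom] with p hp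
    simp only [hhdef, hφdef, Real.norm_eq_abs, abs_mul]
    have h1 : |c p.1 p.2 - ε| = c p.1 p.2 - ε := abs_of_nonneg (by linarith)
    rw [h1]
    have h2 : |f p.1| * |g p.2| ≤ (f p.1 ^ 2 + g p.2 ^ 2) / 2 := by
      nlinarith [sq_nonneg (|f p.1| - |g p.2|), sq_abs (f p.1), sq_abs (g p.2)]
    exact mul_le_mul_of_nonneg_right h2 (by linarith)
  have hhmeas : AEStronglyMeasurable h (μ.prod μ) := by
    apply ((hfi.aestronglyMeasurable.comp_quasiMeasurePreserving
      MeasureTheory.Measure.quasiMeasurePreserving_fst).mul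
      (hgi.aestronglyMeasurable.comp_quasiMeasurePreserving
      MeasureTheory.Measure.quasiMeasurePreserving_snd)).mul
      (hc.aestronglyMeasurable.sub aestronglyMeasurable_const)
  have hhint : Integrable h (μ.prod μ) := Integrable.mono' hφint hhmeas hbound
  -- φ has integral 1 - ε
  have hφval : ∫ p, φ p ∂(μ.prod μ) = 1 - ε := by
    have hexp : φ = fun p : ℝ × ℝ =>
        (f p.1 ^ 2 * c p.1 p.2 + g p.2 ^ 2 * c p.1 p.2) / 2
          - ε * ((f p.1 ^ 2 + g p.2 ^ 2) / 2) := by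
      funext p; simp only [hφdef]; ring
    have hA : Integrable (fun p : ℝ × ℝ =>
        (f p.1 ^ 2 * c p.1 p.2 + g p.2 ^ 2 * c p.1 p.2) / 2) (μ.prod μ) :=
      (hF.add hG).div_const 2
    have hB : Integrable (fun p : ℝ × ℝ =>
        ε * ((f p.1 ^ 2 + g p.2 ^ 2) / 2)) (μ.prod μ) :=
      ((hFfst.add hGsnd).div_const 2).const_mul ε
    have eA : ∫ p, (f p.1 ^ 2 * c p.1 p.2 + g p.2 ^ 2 * c p.1 p.2) / 2 ∂(μ.prod μ) = 1 := by
      rw [integral_div, integral_add hF hG, hFint, hGint]; norm_num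
    have eB : ∫ p, ε * ((f p.1 ^ 2 + g p.2 ^ 2) / 2) ∂(μ.prod μ) = ε := by
      rw [integral_const_mul, integral_div, integral_add hFfst hGsnd, hFfstint, hGsndint]
      norm_num
    rw [hexp, integral_sub hA hB, eA, eB]
  -- split the main integral
  have hsplit : ∫ p, f p.1 * g p.2 * c p.1 p.2 ∂(μ.prod μ)
      = ∫ p, h p ∂(μ.prod μ) := by
    have hdecomp : (fun p : ℝ × ℝ => f p.1 * g p.2 * c p.1 p.2)
        = fun p => h p + ε * (f p.1 * g p.2) := by
      funext p; simp only [hhdef]; ring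
    rw [hdecomp, integral_add hhint (hfg.const_mul ε), integral_const_mul, hfgint,
      mul_zero, add_zero]
  rw [hsplit]
  calc |∫ p, h p ∂(μ.prod μ)| ≤ ∫ p, ‖h p‖ ∂(μ.prod μ) := by
        simpa using norm_integral_le_integral_norm h
    _ ≤ ∫ p, φ p ∂(μ.prod μ) := integral_mono_ae hhint.norm hφint hbound
    _ = 1 - ε := hφval
end
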